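/- Let k ≥ 2 be an integer and let p_1, …, p_k be positive integers with sum M = p_1 + ⋯ + p_k. Define β := M - k·⌊M/k⌋ and θ(k,M) := (⌊M/k⌋!)^{(k-β)/⌊M/k⌋} · (⌈M/k⌉!)^{β/⌈M/k⌉}. Then ∏_{i=1}^{k} (p_i!)^{1/p_i} ≤ θ(k,M), and equality holds if and only if |p_i - p_j| ≤ 1 for all i, j ∈ {1,…,k}. -/

import Mathlib

open Nat Finset

noncomputable def hf (n : ℕ) : ℝ := Real.log (n !) / n

lemma log_factorial (n : ℕ) :
    Real.log (n ! : ℝ) = ∑ j ∈ Finset.range n, Real.log ((j : ℝ) + 1) := by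
  induction n with
  | zero => simp
  | succ n ih =>
      rw [Finset.sum_range_succ, ← ih, Nat.factorial_succ]
      push_cast
      rw [Real.log_mul (by positivity) (by positivity)]
      ring

lemma gauss_sum_real (n : ℕ) :
    ∑ j ∈ Finset.range n, ((j : ℝ) + 1) = n * (n + 1) / 2 := by
  induction n with
  | zero => simp
  | succ n ih => rw [Finset.sum_range_succ, ih]; push_cast; ring

lemma key1 {n : ℕ} (hn : 1 ≤ n) :
    (n : ℝ) / 2 < n * Real.log ((n : ℝ) + 1) - Real.log (n !) := by
  rw [log_factorial]
  have h1 : (n : ℝ) * Real.log ((n : ℝ) + 1) - ∑ j ∈ Finset.range n, Real.log ((j : ℝ) + 1)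
      = ∑ j ∈ Finset.range n, (Real.log ((n : ℝ) + 1) - Real.log ((j : ℝ) + 1)) := by
    rw [Finset.sum_sub_distrib, Finset.sum_const, Finset.card_range, nsmul_eq_mul]
  rw [h1]
  have h2 : ∑ j ∈ Finset.range n, (1 - ((j : ℝ) + 1) / ((n : ℝ) + 1))
      < ∑ j ∈ Finset.range n, (Real.log ((n : ℝ) + 1) - Real.log ((j : ℝ) + 1)) := by
    apply Finset.sum_lt_sum_of_nonempty
    · exact Finset.nonempty_range_iff.mpr (by omega)
    · intro j hj
      have hjn : j < n := Finset.mem_range.mp hj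
      have hx : (0 : ℝ) < ((j : ℝ) + 1) / ((n : ℝ) + 1) := by positivity
      have hx1 : ((j : ℝ) + 1) / ((n : ℝ) + 1) ≠ 1 := by
        have : (j : ℝ) + 1 < (n : ℝ) + 1 := by
          have : (j : ℝ) < n := by exact_mod_cast hjn
          linarith
        intro h
        rw [div_eq_one_iff_eq (by positivity)] at h
        linarith
      have := Real.log_lt_sub_one_of_pos hx hx1
      rw [Real.log_div (by positivity) (by positivity)] at this
      linarith
  refine lt_of_le_of_lt ?_ h2
  rw [Finset.sum_sub_distrib, Finset.sum_const, Finset.card_range, nsmul_eq_mul, mul_one,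
    ← Finset.sum_div, gauss_sum_real]
  have hn1 : (0:ℝ) < (n:ℝ) + 1 := by positivity
  have e : (n:ℝ) * ((n:ℝ)+1) / 2 / ((n:ℝ)+1) = (n:ℝ)/2 := by
    field_simp
  rw [e]
  linarith

lemma key2 (n : ℕ) :
    (n : ℝ) * ((n : ℝ) + 1) * (Real.log ((n : ℝ) + 2) - Real.log ((n : ℝ) + 1)) ≤ n := by
  have h := Real.log_le_sub_one_of_pos (show (0:ℝ) < ((n:ℝ)+2)/((n:ℝ)+1) by positivity)
  rw [Real.log_div (by positivity) (by positivity)] at h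
  have hn1 : (0:ℝ) < (n:ℝ) + 1 := by positivity
  have : ((n:ℝ)+2)/((n:ℝ)+1) - 1 = 1/((n:ℝ)+1) := by
    field_simp
    ring
  rw [this] at h
  have h2 : (n:ℝ) * ((n:ℝ)+1) * (Real.log ((n:ℝ)+2) - Real.log ((n:ℝ)+1))
      ≤ (n:ℝ) * ((n:ℝ)+1) * (1/((n:ℝ)+1)) := by
    apply mul_le_mul_of_nonneg_left h (by positivity)
  calc (n : ℝ) * ((n : ℝ) + 1) * (Real.log ((n : ℝ) + 2) - Real.log ((n : ℝ) + 1))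
      ≤ (n:ℝ) * ((n:ℝ)+1) * (1/((n:ℝ)+1)) := h2
    _ = n := by field_simp

lemma D_step {n : ℕ} (hn : 1 ≤ n) : hf (n+2) - hf (n+1) < hf (n+1) - hf n := by
  have hx : (1:ℝ) ≤ (n:ℝ) := by exact_mod_cast hn
  set x := (n:ℝ) with hxdef
  set s := Real.log (n !) with hs
  set L := Real.log (x+1) with hL
  set L2 := Real.log (x+2) with hL2
  have hx0 : (0:ℝ) < x := by linarith
  have h1p : (0:ℝ) < x+1 := by linarith
  have h2p : (0:ℝ) < x+2 := by linarith
  have hfn : hf n = s / x := by simp [hf, hxdef, hs]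
  have hfn1 : hf (n+1) = (s + L)/(x+1) := by
    simp only [hf, Nat.factorial_succ]
    push_cast
    rw [Real.log_mul (by positivity) (by positivity)]
    rw [hL, hxdef, hs]
    ring_nf
  have hfn2 : hf (n+2) = (s + L + L2)/(x+2) := by
    have : (n+2)! = (n+2) * ((n+1) * n !) := by
      rw [← Nat.factorial_succ, ← Nat.factorial_succ]
    simp only [hf, this]
    push_cast
    rw [Real.log_mul (by positivity) (by positivity),
      Real.log_mul (by positivity) (by positivity)]
    rw [hL, hL2, hxdef, hs]
    ring_nf
  have hk1 : x/2 < x * L - s := key1 hn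
  have hk2 : x * (x+1) * (L2 - L) ≤ x := key2 n
  rw [hfn, hfn1, hfn2, sub_lt_sub_iff]
  rw [div_add_div _ _ h2p.ne' hx0.ne', div_add_div _ _ h1p.ne' h1p.ne',
    div_lt_div_iff₀ (by positivity) (by positivity)]
  nlinarith [mul_lt_mul_of_pos_left hk1 h1p, mul_le_mul_of_nonneg_left hk2 h1p.le]

lemma D_lt {a b : ℕ} (ha : 1 ≤ a) (hab : a < b) :
    hf (b+1) - hf b < hf (a+1) - hf a := by
  induction b with
  | zero => omega
  | succ b ih =>
      rcases Nat.lt_or_ge a b with h | h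
      · have := ih h
        have h2 := D_step (show 1 ≤ b by omega)
        linarith
      · have : a = b := by omega
        subst this
        exact D_step ha

lemma h_smooth {a b : ℕ} (ha : 1 ≤ a) (hab : a + 2 ≤ b) :
    hf a + hf b < hf (a+1) + hf (b-1) := by
  obtain ⟨c, rfl⟩ : ∃ c, b = c + 1 := ⟨b - 1, by omega⟩
  simp only [Nat.add_sub_cancel]
  have := D_lt ha (show a < c by omega)
  linarith

noncomputable def Tval (k M : ℕ) : ℝ :=
  ((k - M % k : ℕ) : ℝ) * hf (M / k) + ((M % k : ℕ) : ℝ) * hf (M / k + 1)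

lemma sum_two_update {α : Type*} [AddCommMonoid α] {k : ℕ} (f : Fin k → α)
    {i j : Fin k} (hij : i ≠ j) (u v : α) :
    (∑ x, Function.update (Function.update f i u) j v x) + f i + f j
      = (∑ x, f x) + u + v := by
  classical
  rw [Finset.sum_update_of_mem (Finset.mem_univ j)]
  rw [Finset.sum_update_of_mem (by simp [hij] : i ∈ Finset.univ \ {j})]
  rw [Finset.sum_eq_sum_sdiff_singleton_add (Finset.mem_univ j) f]
  rw [Finset.sum_eq_sum_sdiff_singleton_add (by simp [hij] : i ∈ Finset.univ \ {j}) f]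
  abel

lemma sum_update2 {α : Type*} [AddCommMonoid α] {k : ℕ} (gg : ℕ → α) (p : Fin k → ℕ)
    {i j : Fin k} (hij : i ≠ j) (u v : ℕ) :
    (∑ t, gg (Function.update (Function.update p i u) j v t)) + gg (p i) + gg (p j)
      = (∑ t, gg (p t)) + gg u + gg v := by
  have hcomp : (fun t => gg (Function.update (Function.update p i u) j v t))
      = Function.update (Function.update (fun t => gg (p t)) i (gg u)) j (gg v) := by
    funext t
    simp only [Function.update_apply]
    split_ifs <;> rfl
  calc (∑ t, gg (Function.update (Function.update p i u) j v t)) + gg (p i) + gg (p j)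
      = (∑ t, Function.update (Function.update (fun t => gg (p t)) i (gg u)) j (gg v) t)
          + gg (p i) + gg (p j) := by rw [hcomp]
    _ = (∑ t, gg (p t)) + gg u + gg v := sum_two_update (fun t => gg (p t)) hij (gg u) (gg v)

lemma balanced_value {k : ℕ} (hk : 1 ≤ k) (p : Fin k → ℕ)
    (hbal : ∀ i j, p i ≤ p j + 1) :
    ∑ i, hf (p i) = Tval k (∑ i, p i) := by
  classical
  have : Nonempty (Fin k) := ⟨⟨0, by omega⟩⟩
  obtain ⟨i0, -, hmin⟩ := Finset.exists_min_image Finset.univ p Finset.univ_nonempty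
  set m := p i0 with hm
  have hub : ∀ i, p i ≤ m + 1 := fun i => hbal i i0
  have hlb : ∀ i, m ≤ p i := fun i => hmin i (Finset.mem_univ i)
  have hcompl : ∀ i ∈ Finset.univ.filter (fun i => ¬ p i = m + 1), p i = m := by
    intro i hi
    have h2 := (Finset.mem_filter.mp hi).2
    have := hub i; have := hlb i; omega
  have hmem : ∀ i ∈ Finset.univ.filter (fun i => p i = m + 1), p i = m + 1 :=
    fun i hi => (Finset.mem_filter.mp hi).2
  set c := (Finset.univ.filter (fun i => p i = m + 1)).card with hc
  have hck : c < k := by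
    have hi0 : i0 ∉ Finset.univ.filter (fun i => p i = m + 1) := by
      simp only [Finset.mem_filter, Finset.mem_univ, true_and]
      omega
    have h1 : c ≤ (Finset.univ.erase i0).card :=
      Finset.card_le_card (fun x hx => Finset.mem_erase.mpr
        ⟨by rintro rfl; exact hi0 hx, Finset.mem_univ x⟩)
    have h2 : (Finset.univ.erase i0).card = k - 1 := by
      rw [Finset.card_erase_of_mem (Finset.mem_univ i0), Finset.card_univ, Fintype.card_fin]
    omega
  have hcardnot : (Finset.univ.filter (fun i => ¬ p i = m + 1)).card = k - c := by
    have h1 := Finset.card_filter_add_card_filter_not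
      (s := (Finset.univ : Finset (Fin k))) (p := fun i => p i = m + 1)
    simp only [Finset.card_univ, Fintype.card_fin] at h1
    rw [hc]
    omega
  have hsplit : ∀ (gg : ℕ → ℝ), ∑ i, gg (p i) = c * gg (m + 1) + (k - c : ℕ) * gg m := by
    intro gg
    rw [← Finset.sum_filter_add_sum_filter_not Finset.univ (fun i => p i = m + 1)]
    have e1 : ∑ i ∈ Finset.univ.filter (fun i => p i = m + 1), gg (p i)
        = c * gg (m + 1) := by
      rw [Finset.sum_congr rfl (fun i hi => by rw [hmem i hi] : ∀ i ∈ Finset.univ.filter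
        (fun i => p i = m + 1), gg (p i) = gg (m+1)), Finset.sum_const, nsmul_eq_mul]
    have e2 : ∑ i ∈ Finset.univ.filter (fun i => ¬ p i = m + 1), gg (p i)
        = (k - c : ℕ) * gg m := by
      rw [Finset.sum_congr rfl (fun i hi => by rw [hcompl i hi] : ∀ i ∈ Finset.univ.filter
        (fun i => ¬ p i = m + 1), gg (p i) = gg m), Finset.sum_const, hcardnot, nsmul_eq_mul]
    rw [e1, e2]
  have hMsum : ∑ i, p i = k * m + c := by
    have h1 : ∑ i, p i = ∑ i ∈ Finset.univ.filter (fun i => p i = m + 1), p i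
        + ∑ i ∈ Finset.univ.filter (fun i => ¬ p i = m + 1), p i := by
      rw [Finset.sum_filter_add_sum_filter_not]
    have h2 : ∑ i ∈ Finset.univ.filter (fun i => p i = m + 1), p i = c * (m + 1) := by
      rw [Finset.sum_congr rfl hmem, Finset.sum_const, smul_eq_mul]
    have h3 : ∑ i ∈ Finset.univ.filter (fun i => ¬ p i = m + 1), p i = (k - c) * m := by
      rw [Finset.sum_congr rfl hcompl, Finset.sum_const, hcardnot, smul_eq_mul]
    obtain ⟨d, hd⟩ : ∃ d, k = c + d := ⟨k - c, by omega⟩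
    rw [h1, h2, h3, hd]
    have h4 : c + d - c = d := by omega
    rw [h4]
    ring
  have hdiv : (∑ i, p i) / k = m := by
    rw [hMsum, Nat.mul_add_div (by omega), Nat.div_eq_of_lt hck]
    omega
  have hmod : (∑ i, p i) % k = c := by
    rw [hMsum, Nat.mul_add_mod, Nat.mod_eq_of_lt hck]
  rw [Tval, hdiv, hmod, hsplit hf]
  ring

lemma improve {k : ℕ} (p : Fin k → ℕ) (hp : ∀ i, 1 ≤ p i) {i j : Fin k}
    (hij : p i + 2 ≤ p j) :
    ∃ q : Fin k → ℕ, (∀ t, 1 ≤ q t) ∧ (∑ t, q t = ∑ t, p t) ∧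
      (∑ t, q t * q t < ∑ t, p t * p t) ∧ (∑ t, hf (p t) < ∑ t, hf (q t)) := by
  have hne : i ≠ j := by intro h; rw [h] at hij; omega
  refine ⟨Function.update (Function.update p i (p i + 1)) j (p j - 1), ?_, ?_, ?_, ?_⟩
  · intro t
    simp only [Function.update_apply]
    split_ifs with h1 h2
    · omega
    · omega
    · exact hp t
  · have := sum_update2 (fun n => n) p hne (p i + 1) (p j - 1)
    omega
  · have h1 := sum_update2 (fun n => n * n) p hne (p i + 1) (p j - 1)
    have h2 : (p i + 1) * (p i + 1) + (p j - 1) * (p j - 1) + 2 ≤ p i * p i + p j * p j := by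
      obtain ⟨b, hb⟩ : ∃ b, p j = b + 1 := ⟨p j - 1, by omega⟩
      rw [hb]
      simp only [Nat.add_sub_cancel]
      have hab : p i + 1 ≤ b := by omega
      nlinarith
    omega
  · have h1 := sum_update2 hf p hne (p i + 1) (p j - 1)
    have h2 := h_smooth (hp i) hij
    linarith

lemma main_bound {k : ℕ} (hk : 1 ≤ k) (N : ℕ) : ∀ (p : Fin k → ℕ),
    (∑ t, p t * p t ≤ N) → (∀ i, 1 ≤ p i) →
    (∑ t, hf (p t) ≤ Tval k (∑ t, p t)) ∧
      (¬(∀ i j, p i ≤ p j + 1) → ∑ t, hf (p t) < Tval k (∑ t, p t)) := by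
  induction N with
  | zero =>
      intro p hN hp
      exfalso
      have : Nonempty (Fin k) := ⟨⟨0, by omega⟩⟩
      obtain ⟨i0⟩ := this
      have h1 : 1 ≤ p i0 * p i0 := Nat.one_le_iff_ne_zero.mpr (by
        have := hp i0; positivity)
      have h2 : p i0 * p i0 ≤ ∑ t, p t * p t :=
        Finset.single_le_sum (f := fun t => p t * p t) (fun t _ => Nat.zero_le _) (Finset.mem_univ i0)
      omega
  | succ N ih =>
      intro p hN hp
      by_cases hbal : ∀ i j, p i ≤ p j + 1
      · rw [balanced_value hk p hbal]
        exact ⟨le_refl _, fun h => absurd hbal h⟩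
      · push_neg at hbal
        obtain ⟨i, j, hij⟩ := hbal
        obtain ⟨q, hq1, hq2, hq3, hq4⟩ := improve p hp (i := j) (j := i) (by omega)
        have hqN : ∑ t, q t * q t ≤ N := by omega
        have := (ih q hqN hq1).1
        rw [hq2] at this
        constructor
        · linarith
        · intro _; linarith

/-- Let `k ≥ 2` and let `p 1, …, p k` be positive integers with sum `M`.
With `β = M - k⌊M/k⌋` and `θ(k,M) = (⌊M/k⌋!)^{(k-β)/⌊M/k⌋} · (⌈M/k⌉!)^{β/⌈M/k⌉}`,
one has `∏ i, (p i !)^{1/p i} ≤ θ(k,M)`, with equality iff `|p i - p j| ≤ 1` for all `i, j`. -/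
theorem stmt_4 (k : ℕ) (hk : 2 ≤ k) (p : Fin k → ℕ) (hp : ∀ i, 0 < p i)
    (M β : ℕ) (hM : M = ∑ i, p i) (hβ : β = M - k * (M / k)) :
    (∏ i, ((p i)! : ℝ) ^ (1 / (p i : ℝ))) ≤
      ((M / k)! : ℝ) ^ (((k : ℝ) - (β : ℝ)) / ((M / k : ℕ) : ℝ)) *
        (((M + k - 1) / k)! : ℝ) ^ ((β : ℝ) / (((M + k - 1) / k : ℕ) : ℝ)) ∧
    ((∏ i, ((p i)! : ℝ) ^ (1 / (p i : ℝ))) =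
      ((M / k)! : ℝ) ^ (((k : ℝ) - (β : ℝ)) / ((M / k : ℕ) : ℝ)) *
        (((M + k - 1) / k)! : ℝ) ^ ((β : ℝ) / (((M + k - 1) / k : ℕ) : ℝ)) ↔
      ∀ i j, |(p i : ℤ) - (p j : ℤ)| ≤ 1) := by
  have hk0 : 0 < k := by omega
  have hβr : β = M % k := by
    have h1 := Nat.mod_add_div M k
    omega
  have hrk : M % k < k := Nat.mod_lt _ hk0
  have hMk : k ≤ M := by
    rw [hM]
    calc k = ∑ _i : Fin k, 1 := by simp
      _ ≤ ∑ i, p i := Finset.sum_le_sum (fun i _ => hp i)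
  have hq1 : 1 ≤ M / k := (Nat.one_le_div_iff hk0).mpr hMk
  -- ceiling division
  have hMqr : M = k * (M / k) + M % k := (Nat.div_add_mod M k).symm
  have hceil : (M + k - 1) / k = if M % k = 0 then M / k else M / k + 1 := by
    obtain ⟨Q, hQ⟩ : ∃ Q, Q = k * (M / k) := ⟨_, rfl⟩
    have he : M + k - 1 = (M % k + (k - 1)) + k * (M / k) := by
      rw [← hQ] at hMqr ⊢
      omega
    rw [he, Nat.add_mul_div_left _ _ hk0]
    by_cases hr : M % k = 0
    · rw [hr]
      simp [Nat.div_eq_of_lt (show k - 1 < k by omega)]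
    · have he2 : M % k + (k - 1) = (M % k - 1) + k := by omega
      rw [he2, Nat.add_div_right _ hk0, Nat.div_eq_of_lt (show M % k - 1 < k by omega)]
      simp only [hr, if_false]
      omega
  -- product as exponential
  have hprod : (∏ i, ((p i)! : ℝ) ^ (1 / (p i : ℝ))) = Real.exp (∑ t, hf (p t)) := by
    rw [Real.exp_sum]
    apply Finset.prod_congr rfl
    intro t _
    rw [Real.rpow_def_of_pos (by exact_mod_cast Nat.factorial_pos (p t)), hf, mul_one_div]
  -- right-hand side as exponential
  have f1 : ((M / k)! : ℝ) ^ (((k : ℝ) - (β : ℝ)) / ((M / k : ℕ) : ℝ))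
      = Real.exp (((k - M % k : ℕ) : ℝ) * hf (M / k)) := by
    rw [Real.rpow_def_of_pos (by exact_mod_cast Nat.factorial_pos (M / k))]
    congr 1
    rw [hf, hβr, Nat.cast_sub hrk.le]
    ring
  have f2 : (((M + k - 1) / k)! : ℝ) ^ ((β : ℝ) / (((M + k - 1) / k : ℕ) : ℝ))
      = Real.exp (((M % k : ℕ) : ℝ) * hf (M / k + 1)) := by
    by_cases hr : M % k = 0
    · rw [hβr, hr]
      simp
    · rw [hceil, if_neg hr, hβr]
      rw [Real.rpow_def_of_pos (by exact_mod_cast Nat.factorial_pos (M / k + 1))]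
      congr 1
      rw [hf]
      push_cast
      ring
  have hrhs : ((M / k)! : ℝ) ^ (((k : ℝ) - (β : ℝ)) / ((M / k : ℕ) : ℝ)) *
        (((M + k - 1) / k)! : ℝ) ^ ((β : ℝ) / (((M + k - 1) / k : ℕ) : ℝ))
      = Real.exp (Tval k M) := by
    rw [f1, f2, ← Real.exp_add, Tval]
  have hmain := main_bound (show 1 ≤ k by omega) (∑ t, p t * p t) p le_rfl (fun i => hp i)
  rw [← hM] at hmain
  constructor
  · rw [hprod, hrhs]
    exact Real.exp_le_exp.mpr hmain.1
  · rw [hprod, hrhs, Real.exp_eq_exp]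
    constructor
    · intro heq i j
      have hbal : ∀ i j, p i ≤ p j + 1 := by
        by_contra hb
        have := hmain.2 hb
        rw [heq] at this
        exact lt_irrefl _ this
      have h1 := hbal i j
      have h2 := hbal j i
      rw [abs_le]
      omega
    · intro habs
      have hbal : ∀ i j, p i ≤ p j + 1 := fun i j => by
        have := habs i j
        rw [abs_le] at this
        omega
      have := balanced_value (show 1 ≤ k by omega) p hbal
      rw [← hM] at this
      exact this
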